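/- For the formal power series a(z) = (1-tz)^{-N_f} (1-t/z)^{-N_f} regarded over ℚ[[t]], the odd logarithmic Fourier coefficients satisfy [log a]_{2n+1} = N_f t^{2n+1}/(2n+1) and the general coefficients satisfy [log a]_n = N_f t^n / n for n ≥ 1, so that exp(-∑_{n≥0} [log a]_{2n+1} + (1/2)∑_{n≥1} n [log a]_n²) = (1-t)^{N_f} (1-t²)^{-N_f(N_f+1)/2} as formal power series in t. -/

import Mathlib

/-- For the symbol `a(z) = (1-tz)^{-N_f}(1-t/z)^{-N_f}` one has
`[log a]_n = N_f t^n / n` for `n ≥ 1` (in particular `[log a]_{2n+1} = N_f t^{2n+1}/(2n+1)`),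
so that
`exp(-∑_{n≥0} [log a]_{2n+1} + (1/2) ∑_{n≥1} n [log a]_n²)
  = (1-t)^{N_f} (1-t²)^{-N_f(N_f+1)/2}`,
stated here as a convergent identity for `|t| < 1`. -/
theorem F_II_formula (Nf : ℕ) (t : ℝ) (ht : |t| < 1) :
    Real.exp (-(∑' n : ℕ, (Nf : ℝ) * t ^ (2 * n + 1) / (2 * n + 1)) +
        (1 / 2) * ∑' n : ℕ, ((n + 1 : ℕ) : ℝ) *
          ((Nf : ℝ) * t ^ (n + 1) / (n + 1)) ^ 2) =
    (1 - t) ^ Nf / (1 - t ^ 2) ^ (Nf * (Nf + 1) / 2) := by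
  have ht1 : 0 < 1 - t := by
    have := abs_lt.mp ht; linarith
  have ht2 : 0 < 1 + t := by
    have := abs_lt.mp ht; linarith
  have ht3 : |t ^ 2| < 1 := by
    rw [abs_pow, ← one_pow 2]
    exact pow_lt_pow_left₀ ht (abs_nonneg t) two_ne_zero
  have ht4 : 0 < 1 - t ^ 2 := by
    have := abs_lt.mp ht3; linarith
  -- first sum
  have h1 : HasSum (fun n : ℕ => (Nf : ℝ) * t ^ (2 * n + 1) / (2 * n + 1))
      ((Nf : ℝ) / 2 * (Real.log (1 + t) - Real.log (1 - t))) := by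
    have h := (Real.hasSum_log_sub_log_of_abs_lt_one ht).mul_left ((Nf : ℝ) / 2)
    refine h.congr_fun fun n => ?_
    have hn : ((2 * n : ℕ) : ℝ) + 1 ≠ 0 := by positivity
    push_cast
    field_simp
  -- second sum
  have h2 : HasSum (fun n : ℕ => ((n + 1 : ℕ) : ℝ) * ((Nf : ℝ) * t ^ (n + 1) / (n + 1)) ^ 2)
      ((Nf : ℝ) ^ 2 * (-Real.log (1 - t ^ 2))) := by
    have h := (Real.hasSum_pow_div_log_of_abs_lt_one ht3).mul_left ((Nf : ℝ) ^ 2)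
    refine h.congr_fun fun n => ?_
    have hn : ((n : ℝ) + 1) ≠ 0 := by positivity
    push_cast
    field_simp
    ring
  rw [h1.tsum_eq, h2.tsum_eq]
  -- the cast of the binomial coefficient
  have hM : ((Nf * (Nf + 1) / 2 : ℕ) : ℝ) = ((Nf : ℝ) ^ 2 + Nf) / 2 := by
    have he : 2 * (Nf * (Nf + 1) / 2) = Nf * (Nf + 1) :=
      Nat.two_mul_div_two_of_even (Nat.even_mul_succ_self Nf)
    have : (2 : ℝ) * ((Nf * (Nf + 1) / 2 : ℕ) : ℝ) = (Nf : ℝ) * (Nf + 1) := by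
      exact_mod_cast congrArg (fun k : ℕ => (k : ℝ)) he
    linarith [this]
  have hlog : Real.log (1 - t ^ 2) = Real.log (1 - t) + Real.log (1 + t) := by
    rw [show (1 : ℝ) - t ^ 2 = (1 - t) * (1 + t) by ring,
      Real.log_mul ht1.ne' ht2.ne']
  rw [show (1 - t) ^ Nf = Real.exp ((Nf : ℝ) * Real.log (1 - t)) by
      rw [← Real.log_pow, Real.exp_log (pow_pos ht1 _)],
    show (1 - t ^ 2) ^ (Nf * (Nf + 1) / 2) =
        Real.exp (((Nf * (Nf + 1) / 2 : ℕ) : ℝ) * Real.log (1 - t ^ 2)) by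
      rw [← Real.log_pow, Real.exp_log (pow_pos ht4 _)],
    ← Real.exp_sub]
  congr 1
  rw [hlog, hM]
  ring
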